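/- Let a, b, q ∈ ℝ with q > 0, and define k := −(a + √(a² + q·b²))/b if b ≠ 0 and k := 0 if b = 0 (the modified Sontag formula). If b = 0 implies a < 0, then a + b·k < 0. Moreover, when b ≠ 0 one has a + b·k = −√(a² + q·b²). -/

import Mathlib

/-- Modified Sontag formula: with `q > 0` and `k = −(a + √(a² + q·b²))/b` if `b ≠ 0`,
`k = 0` otherwise, the condition `b = 0 → a < 0` implies `a + b·k < 0`; moreover when
`b ≠ 0` one has `a + b·k = −√(a² + q·b²)`. -/
theorem modified_sontag_formula (a b q : ℝ) (hq : 0 < q) (k : ℝ)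
    (hk : k = if b ≠ 0 then -(a + Real.sqrt (a ^ 2 + q * b ^ 2)) / b else 0)
    (h : b = 0 → a < 0) :
    a + b * k < 0 ∧ (b ≠ 0 → a + b * k = -Real.sqrt (a ^ 2 + q * b ^ 2)) := by
  by_cases hb : b = 0
  · subst hb
    simp [hk, h rfl]
  · have hkey : a + b * k = -Real.sqrt (a ^ 2 + q * b ^ 2) := by
      rw [hk, if_pos hb]
      field_simp
      ring
    refine ⟨?_, fun _ => hkey⟩
    rw [hkey]
    have hpos : 0 < a ^ 2 + q * b ^ 2 := by positivity
    have := Real.sqrt_pos.mpr hpos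
    linarith
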